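/- Let A and B be nonempty closed convex subsets of ℝ^d such that the distance between them is attained. If S is a nonempty compact set with (P_A ∘ P_B)(S) = S, then every point of S is a point of A nearest to B, i.e., for every s ∈ S, ‖s − P_B(s)‖ = inf{‖x − y‖ : x ∈ A, y ∈ B}. -/
import Mathlib

open Metric RealInnerProductSpace

/-- If `v ∈ K` minimizes the distance to `u` over a convex set `K`, then the
variational inequality holds. -/
lemma min_inner_le_zero {E : Type*} [NormedAddCommGroup E] [InnerProductSpace ℝ E]
    {K : Set E} (hK : Convex ℝ K) {u v : E} (hv : v ∈ K)
    (hmin : ∀ y ∈ K, ‖u - v‖ ≤ ‖u - y‖) :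
    ∀ w ∈ K, ⟪u - v, w - v⟫ ≤ 0 := by
  have : Nonempty K := ⟨⟨v, hv⟩⟩
  have heq : ‖u - v‖ = ⨅ w : K, ‖u - w‖ := by
    refine le_antisymm (le_ciInf fun w => hmin w w.2) ?_
    have hbb : BddBelow (Set.range fun w : K => ‖u - w‖) := by
      refine ⟨0, ?_⟩
      rintro r ⟨w, rfl⟩
      exact norm_nonneg _
    exact ciInf_le hbb ⟨v, hv⟩
  exact (norm_eq_iInf_iff_real_inner_le_zero hK hv).1 heq

theorem stmt_2
    {d : ℕ}
    (A B : Set (EuclideanSpace ℝ (Fin d))) (hA : A.Nonempty) (hB : B.Nonempty)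
    (hAc : IsClosed A) (hBc : IsClosed B)
    (hAconv : Convex ℝ A) (hBconv : Convex ℝ B)
    (PA PB : EuclideanSpace ℝ (Fin d) → EuclideanSpace ℝ (Fin d))
    (hPA : ∀ x, PA x ∈ A ∧ ∀ y ∈ A, ‖x - PA x‖ ≤ ‖x - y‖)
    (hPB : ∀ x, PB x ∈ B ∧ ∀ y ∈ B, ‖x - PB x‖ ≤ ‖x - y‖)
    (hattain : ∃ a ∈ A, ∃ b ∈ B,
      ‖a - b‖ = sInf {r : ℝ | ∃ x ∈ A, ∃ y ∈ B, r = ‖x - y‖})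
    (S : Set (EuclideanSpace ℝ (Fin d))) (hS : S.Nonempty) (hScomp : IsCompact S)
    (hfix : (PA ∘ PB) '' S = S) :
    ∀ s ∈ S, ‖s - PB s‖ = sInf {r : ℝ | ∃ x ∈ A, ∃ y ∈ B, r = ‖x - y‖} := by
  set R : Set ℝ := {r : ℝ | ∃ x ∈ A, ∃ y ∈ B, r = ‖x - y‖} with hR
  obtain ⟨a₀, ha₀⟩ := hA
  obtain ⟨b₀, hb₀⟩ := hB
  have hRne : R.Nonempty := ⟨‖a₀ - b₀‖, a₀, ha₀, b₀, hb₀, rfl⟩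
  have hRbdd : BddBelow R := ⟨0, fun r ⟨x, _, y, _, h⟩ => h ▸ norm_nonneg _⟩
  -- S ⊆ A
  have hSA : ∀ s ∈ S, s ∈ A := by
    intro s hs
    rw [← hfix] at hs
    obtain ⟨x, _, rfl⟩ := hs
    exact (hPA _).1
  -- lower bound
  have hlow : ∀ s ∈ S, sInf R ≤ ‖s - PB s‖ := fun s hs =>
    csInf_le hRbdd ⟨s, hSA s hs, PB s, (hPB s).1, rfl⟩
  -- f s = ‖s - PB s‖ equals infDist s B, hence is continuous
  have hBne : Nonempty B := ⟨⟨b₀, hb₀⟩⟩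
  have hfd : ∀ s, ‖s - PB s‖ = infDist s B := by
    intro s
    refine le_antisymm ?_ ?_
    · rw [infDist_eq_iInf]
      exact le_ciInf fun y => by
        rw [dist_eq_norm]; exact (hPB s).2 y y.2
    · simpa [dist_eq_norm] using infDist_le_dist_of_mem (s := B) (x := s) (hPB s).1
  have hcont : Continuous fun s => ‖s - PB s‖ := by
    have : (fun s : EuclideanSpace ℝ (Fin d) => ‖s - PB s‖) = fun s => infDist s B :=
      funext hfd
    rw [this]
    exact continuous_infDist_pt B
  -- maximum of f on S
  obtain ⟨s₀, hs₀S, hmax⟩ := hScomp.exists_isMaxOn hS hcont.continuousOn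
  -- s₀ has a preimage s₁ in S
  have hs₀' : s₀ ∈ (PA ∘ PB) '' S := by rw [hfix]; exact hs₀S
  obtain ⟨s₁, hs₁S, hTs₁⟩ := hs₀'
  set b : EuclideanSpace ℝ (Fin d) := PB s₁ with hbdef
  -- chain of inequalities showing everything is equal
  have c1 : ‖s₀ - PB s₀‖ ≤ ‖s₀ - b‖ := (hPB s₀).2 b (hPB s₁).1
  have c2 : ‖s₀ - b‖ ≤ ‖s₁ - b‖ := by
    have := (hPA b).2 s₁ (hSA s₁ hs₁S)
    rw [← hTs₁]
    simpa [norm_sub_rev, Function.comp] using this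
  have c3 : ‖s₁ - b‖ ≤ ‖s₀ - PB s₀‖ := hmax hs₁S
  -- so s₁ minimizes the distance to b over A
  have hs₁min : ∀ y ∈ A, ‖b - s₁‖ ≤ ‖b - y‖ := by
    intro y hy
    have h1 : ‖s₁ - b‖ ≤ ‖s₀ - b‖ := le_trans c3 c1
    have h2 : ‖s₀ - b‖ ≤ ‖b - y‖ := by
      have := (hPA b).2 y hy
      rw [← hTs₁]
      simpa [norm_sub_rev, Function.comp] using this
    calc ‖b - s₁‖ = ‖s₁ - b‖ := norm_sub_rev _ _
      _ ≤ ‖b - y‖ := le_trans h1 h2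
  -- variational inequalities
  have hvarA : ∀ w ∈ A, ⟪b - s₁, w - s₁⟫ ≤ 0 :=
    min_inner_le_zero hAconv (hSA s₁ hs₁S) hs₁min
  have hvarB : ∀ w ∈ B, ⟪s₁ - b, w - b⟫ ≤ 0 :=
    min_inner_le_zero hBconv (hPB s₁).1 (hPB s₁).2
  -- ‖s₁ - b‖ is a lower bound for R
  have hlb : ∀ r ∈ R, ‖s₁ - b‖ ≤ r := by
    rintro r ⟨x, hx, y, hy, rfl⟩
    have e1 : (0:ℝ) ≤ ⟪x - s₁, s₁ - b⟫ := by
      have h1 : ⟪x - s₁, b - s₁⟫ ≤ 0 := by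
        have := hvarA x hx; rwa [real_inner_comm] at this
      have h2 : ⟪x - s₁, s₁ - b⟫ = -⟪x - s₁, b - s₁⟫ := by
        rw [show s₁ - b = -(b - s₁) from by abel, inner_neg_right]
      linarith
    have e2 : (0:ℝ) ≤ ⟪b - y, s₁ - b⟫ := by
      have h1 : ⟪y - b, s₁ - b⟫ ≤ 0 := by
        have := hvarB y hy; rwa [real_inner_comm] at this
      have h2 : ⟪b - y, s₁ - b⟫ = -⟪y - b, s₁ - b⟫ := by
        rw [show b - y = -(y - b) from by abel, inner_neg_left]
      linarith
    have e3 : ⟪s₁ - b, s₁ - b⟫ = ‖s₁ - b‖ ^ 2 := real_inner_self_eq_norm_sq _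
    have hsplit : x - y = (x - s₁) + (s₁ - b) + (b - y) := by abel
    have hinner : ‖s₁ - b‖ ^ 2 ≤ ⟪x - y, s₁ - b⟫ := by
      rw [hsplit, inner_add_left, inner_add_left]; linarith
    have hcs : ⟪x - y, s₁ - b⟫ ≤ ‖x - y‖ * ‖s₁ - b‖ := real_inner_le_norm _ _
    nlinarith [norm_nonneg (s₁ - b), norm_nonneg (x - y)]
  have hup : ‖s₁ - b‖ ≤ sInf R := le_csInf hRne hlb
  -- conclude
  intro s hs
  refine le_antisymm ?_ (hlow s hs)
  calc ‖s - PB s‖ ≤ ‖s₀ - PB s₀‖ := hmax hs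
    _ ≤ ‖s₁ - b‖ := le_trans c1 c2
    _ ≤ sInf R := hup
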